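/- For any density matrix ρ supported on the 3-dimensional code span{|001⟩, |010⟩, |100⟩} ⊂ (ℂ²)^⊗3, three independent uses of the amplitude damping channel with damping rate γ give (E_AD)^⊗3(ρ) = (1−γ)ρ + γ|000⟩⟨000|. -/

import Mathlib

open Matrix Kronecker ComplexOrder

noncomputable def A0 (γ : ℝ) : Matrix (Fin 2) (Fin 2) ℂ :=
  !![1, 0; 0, (Real.sqrt (1 - γ) : ℂ)]

noncomputable def A1 (γ : ℝ) : Matrix (Fin 2) (Fin 2) ℂ :=
  !![0, (Real.sqrt γ : ℂ); 0, 0]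

def e (a : Fin 2) : Fin 2 → ℂ := fun i => if i = a then 1 else 0

abbrev Q3 := Fin 2 × Fin 2 × Fin 2

/-- |abc⟩ = e_a ⊗ e_b ⊗ e_c. -/
def ket3 (a b c : Fin 2) : Q3 → ℂ := fun p => e a p.1 * e b p.2.1 * e c p.2.2

/-- projection onto span{|001⟩, |010⟩, |100⟩}. -/
noncomputable def P3 : Matrix Q3 Q3 ℂ :=
  vecMulVec (ket3 0 0 1) (star (ket3 0 0 1)) + vecMulVec (ket3 0 1 0) (star (ket3 0 1 0)) +
    vecMulVec (ket3 1 0 0) (star (ket3 1 0 0))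

/-- the Kraus operator with A1 at positions where s is true and A0 elsewhere. -/
noncomputable def Kr (γ : ℝ) (s : Fin 3 → Bool) : Matrix Q3 Q3 ℂ :=
  (if s 0 then A1 γ else A0 γ) ⊗ₖ ((if s 1 then A1 γ else A0 γ) ⊗ₖ (if s 2 then A1 γ else A0 γ))

/-- three uses of the amplitude damping channel. -/
noncomputable def EAD3 (γ : ℝ) (ρ : Matrix Q3 Q3 ℂ) : Matrix Q3 Q3 ℂ :=
  ∑ s : Fin 3 → Bool, Kr γ s * ρ * (Kr γ s)ᴴ

/-! ### auxiliary lemmas -/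

lemma mul_vecMulVec' {m n p : Type*} [Fintype n] (M : Matrix m n ℂ) (u : n → ℂ) (v : p → ℂ) :
    M * vecMulVec u v = vecMulVec (M *ᵥ u) v := by
  ext i j
  simp [Matrix.mul_apply, vecMulVec_apply, mulVec, dotProduct, Finset.sum_mul, mul_assoc]

lemma vecMulVec_mul' {m n p : Type*} [Fintype n] (u : m → ℂ) (v : n → ℂ) (M : Matrix n p ℂ) :
    vecMulVec u v * M = vecMulVec u (v ᵥ* M) := by
  ext i j
  simp [Matrix.mul_apply, vecMulVec_apply, vecMul, dotProduct, Finset.mul_sum, mul_assoc]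

lemma vecMulVec_mul_vecMulVec' {m n p : Type*} [Fintype n] (a : m → ℂ) (b c : n → ℂ) (d : p → ℂ) :
    vecMulVec a b * vecMulVec c d = (b ⬝ᵥ c) • vecMulVec a d := by
  ext i j
  simp only [Matrix.mul_apply, vecMulVec_apply, Matrix.smul_apply, dotProduct, smul_eq_mul,
    Finset.sum_mul]
  exact Finset.sum_congr rfl fun k _ => by ring

lemma vecMulVec_conjT {m n : Type*} (u : m → ℂ) (v : n → ℂ) :
    (vecMulVec u v)ᴴ = vecMulVec (star v) (star u) := by
  ext i j; simp [conjTranspose_apply, vecMulVec_apply, mul_comm]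

lemma smul_vecMulVec {m n : Type*} (c : ℂ) (u : m → ℂ) (v : n → ℂ) :
    vecMulVec (c • u) v = c • vecMulVec u v := by
  ext i j; simp [vecMulVec_apply, mul_assoc]

lemma zero_vecMulVec {m n : Type*} (v : n → ℂ) :
    vecMulVec (0 : m → ℂ) v = 0 := by
  ext i j; simp [vecMulVec_apply]

lemma ket3_apply (a b c : Fin 2) (p : Q3) : ket3 a b c p = if p = (a, b, c) then 1 else 0 := by
  rcases p with ⟨i, j, k⟩
  by_cases h1 : i = a <;> by_cases h2 : j = b <;> by_cases h3 : k = c <;>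
    simp [ket3, e, h1, h2, h3, Prod.ext_iff]

lemma star_ket3 (a b c : Fin 2) : star (ket3 a b c) = ket3 a b c := by
  funext p; simp [Pi.star_apply, ket3_apply, apply_ite (star : ℂ → ℂ)]

lemma kron_mulVec {m n : Type*} [Fintype m] [Fintype n] (A : Matrix m m ℂ) (B : Matrix n n ℂ)
    (u : m → ℂ) (v : n → ℂ) :
    (A ⊗ₖ B) *ᵥ (fun p : m × n => u p.1 * v p.2) = fun p => (A *ᵥ u) p.1 * (B *ᵥ v) p.2 := by
  funext ⟨i, j⟩
  simp only [mulVec, dotProduct, kroneckerMap_apply, Fintype.sum_prod_type]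
  rw [Finset.sum_mul_sum]
  exact Finset.sum_congr rfl fun k _ => Finset.sum_congr rfl fun l _ => by ring

lemma kr3_mulVec (M1 M2 M3 : Matrix (Fin 2) (Fin 2) ℂ) (a b c : Fin 2) :
    (M1 ⊗ₖ (M2 ⊗ₖ M3)) *ᵥ ket3 a b c =
      fun p => (M1 *ᵥ e a) p.1 * ((M2 *ᵥ e b) p.2.1 * (M3 *ᵥ e c) p.2.2) := by
  have h : ket3 a b c = fun p : Q3 => e a p.1 * ((fun q : Fin 2 × Fin 2 => e b q.1 * e c q.2) p.2) := by
    funext p; simp [ket3, mul_assoc]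
  have step1 := kron_mulVec M1 (M2 ⊗ₖ M3) (e a) (fun q : Fin 2 × Fin 2 => e b q.1 * e c q.2)
  have step2 := kron_mulVec M2 M3 (e b) (e c)
  calc (M1 ⊗ₖ (M2 ⊗ₖ M3)) *ᵥ ket3 a b c
      = fun p : Q3 => (M1 *ᵥ e a) p.1 *
          ((M2 ⊗ₖ M3) *ᵥ fun q : Fin 2 × Fin 2 => e b q.1 * e c q.2) p.2 := by rw [h]; exact step1
    _ = fun p => (M1 *ᵥ e a) p.1 * ((M2 *ᵥ e b) p.2.1 * (M3 *ᵥ e c) p.2.2) := by rw [step2]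

lemma A0_e0 (γ : ℝ) : A0 γ *ᵥ e 0 = e 0 := by
  funext i; fin_cases i <;> simp [A0, e, mulVec, dotProduct, Fin.sum_univ_succ]
lemma A0_e1 (γ : ℝ) : A0 γ *ᵥ e 1 = ((Real.sqrt (1 - γ) : ℂ)) • e 1 := by
  funext i; fin_cases i <;> simp [A0, e, mulVec, dotProduct, Fin.sum_univ_succ]
lemma A1_e0 (γ : ℝ) : A1 γ *ᵥ e 0 = 0 := by
  funext i; fin_cases i <;> simp [A1, e, mulVec, dotProduct, Fin.sum_univ_succ]
lemma A1_e1 (γ : ℝ) : A1 γ *ᵥ e 1 = ((Real.sqrt γ : ℂ)) • e 0 := by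
  funext i; fin_cases i <;> simp [A1, e, mulVec, dotProduct, Fin.sum_univ_succ]

lemma P3_herm : P3ᴴ = P3 := by
  simp [P3, conjTranspose_add, vecMulVec_conjT, star_ket3]

/-- Kr * P3 for the all-false pattern. -/
lemma KP_fff (γ : ℝ) : Kr γ ![false, false, false] * P3 = ((Real.sqrt (1 - γ) : ℂ)) • P3 := by
  rw [show Kr γ ![false, false, false] = A0 γ ⊗ₖ (A0 γ ⊗ₖ A0 γ) by simp [Kr]]
  have h1 : (A0 γ ⊗ₖ (A0 γ ⊗ₖ A0 γ)) *ᵥ ket3 0 0 1 = ((Real.sqrt (1 - γ) : ℂ)) • ket3 0 0 1 := by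
    simp only [kr3_mulVec, A0_e0, A0_e1, A1_e0, A1_e1]; funext p; simp [ket3, e]; try ring
  have h2 : (A0 γ ⊗ₖ (A0 γ ⊗ₖ A0 γ)) *ᵥ ket3 0 1 0 = ((Real.sqrt (1 - γ) : ℂ)) • ket3 0 1 0 := by
    simp only [kr3_mulVec, A0_e0, A0_e1, A1_e0, A1_e1]; funext p; simp [ket3, e]; try ring
  have h3 : (A0 γ ⊗ₖ (A0 γ ⊗ₖ A0 γ)) *ᵥ ket3 1 0 0 = ((Real.sqrt (1 - γ) : ℂ)) • ket3 1 0 0 := by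
    simp only [kr3_mulVec, A0_e0, A0_e1, A1_e0, A1_e1]; funext p; simp [ket3, e]; try ring
  rw [P3, Matrix.mul_add, Matrix.mul_add, mul_vecMulVec', mul_vecMulVec', mul_vecMulVec',
    h1, h2, h3, smul_vecMulVec, smul_vecMulVec, smul_vecMulVec, smul_add, smul_add]

lemma KP_fft (γ : ℝ) : Kr γ ![false, false, true] * P3 =
    ((Real.sqrt γ : ℂ)) • vecMulVec (ket3 0 0 0) (star (ket3 0 0 1)) := by
  rw [show Kr γ ![false, false, true] = A0 γ ⊗ₖ (A0 γ ⊗ₖ A1 γ) by simp [Kr]]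
  have h1 : (A0 γ ⊗ₖ (A0 γ ⊗ₖ A1 γ)) *ᵥ ket3 0 0 1 = ((Real.sqrt γ : ℂ)) • ket3 0 0 0 := by
    simp only [kr3_mulVec, A0_e0, A0_e1, A1_e0, A1_e1]; funext p; simp [ket3, e]; try ring
  have h2 : (A0 γ ⊗ₖ (A0 γ ⊗ₖ A1 γ)) *ᵥ ket3 0 1 0 = 0 := by
    simp only [kr3_mulVec, A0_e0, A0_e1, A1_e0, A1_e1]; funext p; simp [ket3, e]; try ring
  have h3 : (A0 γ ⊗ₖ (A0 γ ⊗ₖ A1 γ)) *ᵥ ket3 1 0 0 = 0 := by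
    simp only [kr3_mulVec, A0_e0, A0_e1, A1_e0, A1_e1]; funext p; simp [ket3, e]; try ring
  rw [P3, Matrix.mul_add, Matrix.mul_add, mul_vecMulVec', mul_vecMulVec', mul_vecMulVec',
    h1, h2, h3, smul_vecMulVec, zero_vecMulVec, zero_vecMulVec, add_zero, add_zero]

lemma KP_ftf (γ : ℝ) : Kr γ ![false, true, false] * P3 =
    ((Real.sqrt γ : ℂ)) • vecMulVec (ket3 0 0 0) (star (ket3 0 1 0)) := by
  rw [show Kr γ ![false, true, false] = A0 γ ⊗ₖ (A1 γ ⊗ₖ A0 γ) by simp [Kr]]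
  have h1 : (A0 γ ⊗ₖ (A1 γ ⊗ₖ A0 γ)) *ᵥ ket3 0 0 1 = 0 := by
    simp only [kr3_mulVec, A0_e0, A0_e1, A1_e0, A1_e1]; funext p; simp [ket3, e]; try ring
  have h2 : (A0 γ ⊗ₖ (A1 γ ⊗ₖ A0 γ)) *ᵥ ket3 0 1 0 = ((Real.sqrt γ : ℂ)) • ket3 0 0 0 := by
    simp only [kr3_mulVec, A0_e0, A0_e1, A1_e0, A1_e1]; funext p; simp [ket3, e]; try ring
  have h3 : (A0 γ ⊗ₖ (A1 γ ⊗ₖ A0 γ)) *ᵥ ket3 1 0 0 = 0 := by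
    simp only [kr3_mulVec, A0_e0, A0_e1, A1_e0, A1_e1]; funext p; simp [ket3, e]; try ring
  rw [P3, Matrix.mul_add, Matrix.mul_add, mul_vecMulVec', mul_vecMulVec', mul_vecMulVec',
    h1, h2, h3, smul_vecMulVec, zero_vecMulVec, zero_vecMulVec, add_zero, zero_add]

lemma KP_tff (γ : ℝ) : Kr γ ![true, false, false] * P3 =
    ((Real.sqrt γ : ℂ)) • vecMulVec (ket3 0 0 0) (star (ket3 1 0 0)) := by
  rw [show Kr γ ![true, false, false] = A1 γ ⊗ₖ (A0 γ ⊗ₖ A0 γ) by simp [Kr]]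
  have h1 : (A1 γ ⊗ₖ (A0 γ ⊗ₖ A0 γ)) *ᵥ ket3 0 0 1 = 0 := by
    simp only [kr3_mulVec, A0_e0, A0_e1, A1_e0, A1_e1]; funext p; simp [ket3, e]; try ring
  have h2 : (A1 γ ⊗ₖ (A0 γ ⊗ₖ A0 γ)) *ᵥ ket3 0 1 0 = 0 := by
    simp only [kr3_mulVec, A0_e0, A0_e1, A1_e0, A1_e1]; funext p; simp [ket3, e]; try ring
  have h3 : (A1 γ ⊗ₖ (A0 γ ⊗ₖ A0 γ)) *ᵥ ket3 1 0 0 = ((Real.sqrt γ : ℂ)) • ket3 0 0 0 := by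
    simp only [kr3_mulVec, A0_e0, A0_e1, A1_e0, A1_e1]; funext p; simp [ket3, e]; try ring
  rw [P3, Matrix.mul_add, Matrix.mul_add, mul_vecMulVec', mul_vecMulVec', mul_vecMulVec',
    h1, h2, h3, smul_vecMulVec, zero_vecMulVec, zero_vecMulVec, zero_add, zero_add]

lemma KP_ftt (γ : ℝ) : Kr γ ![false, true, true] * P3 = 0 := by
  rw [show Kr γ ![false, true, true] = A0 γ ⊗ₖ (A1 γ ⊗ₖ A1 γ) by simp [Kr]]
  have h1 : (A0 γ ⊗ₖ (A1 γ ⊗ₖ A1 γ)) *ᵥ ket3 0 0 1 = 0 := by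
    simp only [kr3_mulVec, A0_e0, A0_e1, A1_e0, A1_e1]; funext p; simp [ket3, e]; try ring
  have h2 : (A0 γ ⊗ₖ (A1 γ ⊗ₖ A1 γ)) *ᵥ ket3 0 1 0 = 0 := by
    simp only [kr3_mulVec, A0_e0, A0_e1, A1_e0, A1_e1]; funext p; simp [ket3, e]; try ring
  have h3 : (A0 γ ⊗ₖ (A1 γ ⊗ₖ A1 γ)) *ᵥ ket3 1 0 0 = 0 := by
    simp only [kr3_mulVec, A0_e0, A0_e1, A1_e0, A1_e1]; funext p; simp [ket3, e]; try ring
  rw [P3, Matrix.mul_add, Matrix.mul_add, mul_vecMulVec', mul_vecMulVec', mul_vecMulVec',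
    h1, h2, h3, zero_vecMulVec, zero_vecMulVec, zero_vecMulVec, add_zero, add_zero]

lemma KP_tft (γ : ℝ) : Kr γ ![true, false, true] * P3 = 0 := by
  rw [show Kr γ ![true, false, true] = A1 γ ⊗ₖ (A0 γ ⊗ₖ A1 γ) by simp [Kr]]
  have h1 : (A1 γ ⊗ₖ (A0 γ ⊗ₖ A1 γ)) *ᵥ ket3 0 0 1 = 0 := by
    simp only [kr3_mulVec, A0_e0, A0_e1, A1_e0, A1_e1]; funext p; simp [ket3, e]; try ring
  have h2 : (A1 γ ⊗ₖ (A0 γ ⊗ₖ A1 γ)) *ᵥ ket3 0 1 0 = 0 := by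
    simp only [kr3_mulVec, A0_e0, A0_e1, A1_e0, A1_e1]; funext p; simp [ket3, e]; try ring
  have h3 : (A1 γ ⊗ₖ (A0 γ ⊗ₖ A1 γ)) *ᵥ ket3 1 0 0 = 0 := by
    simp only [kr3_mulVec, A0_e0, A0_e1, A1_e0, A1_e1]; funext p; simp [ket3, e]; try ring
  rw [P3, Matrix.mul_add, Matrix.mul_add, mul_vecMulVec', mul_vecMulVec', mul_vecMulVec',
    h1, h2, h3, zero_vecMulVec, zero_vecMulVec, zero_vecMulVec, add_zero, add_zero]

lemma KP_ttf (γ : ℝ) : Kr γ ![true, true, false] * P3 = 0 := by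
  rw [show Kr γ ![true, true, false] = A1 γ ⊗ₖ (A1 γ ⊗ₖ A0 γ) by simp [Kr]]
  have h1 : (A1 γ ⊗ₖ (A1 γ ⊗ₖ A0 γ)) *ᵥ ket3 0 0 1 = 0 := by
    simp only [kr3_mulVec, A0_e0, A0_e1, A1_e0, A1_e1]; funext p; simp [ket3, e]; try ring
  have h2 : (A1 γ ⊗ₖ (A1 γ ⊗ₖ A0 γ)) *ᵥ ket3 0 1 0 = 0 := by
    simp only [kr3_mulVec, A0_e0, A0_e1, A1_e0, A1_e1]; funext p; simp [ket3, e]; try ring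
  have h3 : (A1 γ ⊗ₖ (A1 γ ⊗ₖ A0 γ)) *ᵥ ket3 1 0 0 = 0 := by
    simp only [kr3_mulVec, A0_e0, A0_e1, A1_e0, A1_e1]; funext p; simp [ket3, e]; try ring
  rw [P3, Matrix.mul_add, Matrix.mul_add, mul_vecMulVec', mul_vecMulVec', mul_vecMulVec',
    h1, h2, h3, zero_vecMulVec, zero_vecMulVec, zero_vecMulVec, add_zero, add_zero]

lemma KP_ttt (γ : ℝ) : Kr γ ![true, true, true] * P3 = 0 := by
  rw [show Kr γ ![true, true, true] = A1 γ ⊗ₖ (A1 γ ⊗ₖ A1 γ) by simp [Kr]]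
  have h1 : (A1 γ ⊗ₖ (A1 γ ⊗ₖ A1 γ)) *ᵥ ket3 0 0 1 = 0 := by
    simp only [kr3_mulVec, A0_e0, A0_e1, A1_e0, A1_e1]; funext p; simp [ket3, e]; try ring
  have h2 : (A1 γ ⊗ₖ (A1 γ ⊗ₖ A1 γ)) *ᵥ ket3 0 1 0 = 0 := by
    simp only [kr3_mulVec, A0_e0, A0_e1, A1_e0, A1_e1]; funext p; simp [ket3, e]; try ring
  have h3 : (A1 γ ⊗ₖ (A1 γ ⊗ₖ A1 γ)) *ᵥ ket3 1 0 0 = 0 := by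
    simp only [kr3_mulVec, A0_e0, A0_e1, A1_e0, A1_e1]; funext p; simp [ket3, e]; try ring
  rw [P3, Matrix.mul_add, Matrix.mul_add, mul_vecMulVec', mul_vecMulVec', mul_vecMulVec',
    h1, h2, h3, zero_vecMulVec, zero_vecMulVec, zero_vecMulVec, add_zero, add_zero]

lemma row_dot (ρ : Matrix Q3 Q3 ℂ) (a b c a' b' c' : Fin 2) :
    (star (ket3 a b c) ᵥ* ρ) ⬝ᵥ ket3 a' b' c' = ρ (a, b, c) (a', b', c') := by
  simp [star_ket3, vecMul, dotProduct, ket3_apply]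

def q8 : (Bool × Bool × Bool) ≃ (Fin 3 → Bool) :=
  ⟨fun p => ![p.1, p.2.1, p.2.2], fun s => (s 0, s 1, s 2), by decide, by decide⟩

theorem qutrit_dualrail_simulates_erasure (γ : ℝ) (hγ0 : 0 ≤ γ) (hγ1 : γ ≤ 1)
    (ρ : Matrix Q3 Q3 ℂ) (hρ : ρ.PosSemidef) (htr : ρ.trace = 1)
    (hsupp : P3 * ρ * P3 = ρ) :
    EAD3 γ ρ = ((1 - γ : ℝ) : ℂ) • ρ +
      ((γ : ℝ) : ℂ) • vecMulVec (ket3 0 0 0) (star (ket3 0 0 0)) := by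
  -- entries of ρ on the diagonal outside the support vanish
  have hz : ∀ x : Q3, x ≠ ((0:Fin 2), (0:Fin 2), (1:Fin 2)) → x ≠ (0, 1, 0) → x ≠ (1, 0, 0) →
      ρ x x = 0 := by
    intro x h1 h2 h3
    conv_lhs => rw [← hsupp]
    rw [Matrix.mul_assoc, Matrix.mul_apply]
    apply Finset.sum_eq_zero
    intro k _
    have hx : P3 x k = 0 := by
      simp only [P3, Matrix.add_apply, vecMulVec_apply, ket3_apply, star_ket3]
      simp only [mul_ite, mul_one, mul_zero, ite_mul, one_mul, zero_mul]
      simp [h1, h2, h3]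
      all_goals tauto
    rw [hx, zero_mul]
  -- the three diagonal entries on the support sum to 1
  have hsum : ρ (0, 0, 1) (0, 0, 1) + ρ (0, 1, 0) (0, 1, 0) + ρ (1, 0, 0) (1, 0, 0) = 1 := by
    rw [Matrix.trace] at htr
    simp only [Fintype.sum_prod_type, Fin.sum_univ_two, Matrix.diag_apply] at htr
    have z1 := hz (0, 0, 0) (by decide) (by decide) (by decide)
    have z2 := hz (0, 1, 1) (by decide) (by decide) (by decide)
    have z3 := hz (1, 0, 1) (by decide) (by decide) (by decide)
    have z4 := hz (1, 1, 0) (by decide) (by decide) (by decide)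
    have z5 := hz (1, 1, 1) (by decide) (by decide) (by decide)
    linear_combination htr - z1 - z2 - z3 - z4 - z5
  -- rewrite each Kraus term through the projector
  have hterm : ∀ s, Kr γ s * ρ * (Kr γ s)ᴴ = (Kr γ s * P3) * ρ * (Kr γ s * P3)ᴴ := by
    intro s
    conv_lhs => rw [← hsupp]
    rw [Matrix.conjTranspose_mul, P3_herm]
    simp only [Matrix.mul_assoc]
  have hγ' : (1:ℝ) - γ ≥ 0 := by linarith
  -- value of the all-false term
  have T0 : Kr γ ![false, false, false] * ρ * (Kr γ ![false, false, false])ᴴ =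
      ((1 - γ : ℝ) : ℂ) • ρ := by
    rw [hterm, KP_fff, Matrix.conjTranspose_smul, P3_herm]
    rw [Matrix.smul_mul, Matrix.smul_mul, Matrix.mul_smul, smul_smul, hsupp]
    congr 1
    simp only [Complex.star_def, Complex.conj_ofReal]
    rw [← Complex.ofReal_mul, Real.mul_self_sqrt hγ']
  -- value of the single-damping terms
  have T1 : ∀ a b c : Fin 2,
      (((Real.sqrt γ : ℂ)) • vecMulVec (ket3 0 0 0) (star (ket3 a b c))) * ρ *
        (((Real.sqrt γ : ℂ)) • vecMulVec (ket3 0 0 0) (star (ket3 a b c)))ᴴ =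
      ((γ : ℝ) : ℂ) • ρ (a, b, c) (a, b, c) •
        vecMulVec (ket3 0 0 0) (star (ket3 0 0 0)) := by
    intro a b c
    have hg : (Real.sqrt γ : ℂ) * star (Real.sqrt γ : ℂ) = ((γ : ℝ) : ℂ) := by
      simp only [Complex.star_def, Complex.conj_ofReal]
      rw [← Complex.ofReal_mul, Real.mul_self_sqrt hγ0]
    rw [Matrix.conjTranspose_smul, vecMulVec_conjT, star_star]
    rw [Matrix.smul_mul, Matrix.smul_mul, Matrix.mul_smul, smul_smul, hg]
    rw [vecMulVec_mul', vecMulVec_mul_vecMulVec', row_dot]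
  have T1a := T1 0 0 1
  have T1b := T1 0 1 0
  have T1c := T1 1 0 0
  -- expand the sum over the 8 Kraus patterns
  rw [EAD3, ← Equiv.sum_comp q8 (fun s => Kr γ s * ρ * (Kr γ s)ᴴ)]
  simp only [Fintype.sum_prod_type, Fintype.sum_bool, q8, Equiv.coe_fn_mk]
  rw [hterm ![true,true,true], hterm ![true,true,false], hterm ![true,false,true],
    hterm ![true,false,false], hterm ![false,true,true], hterm ![false,true,false],
    hterm ![false,false,true]]
  rw [KP_ttt, KP_ttf, KP_tft, KP_tff, KP_ftt, KP_ftf, KP_fft]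
  rw [T0, T1a, T1b, T1c]
  simp only [Matrix.zero_mul, Matrix.conjTranspose_zero, Matrix.mul_zero, zero_add, add_zero]
  match_scalars
  · linear_combination (γ:ℂ) * hsum
  · ring
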